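/- For the disjoint union G ∪ H of graphs G and H, γ_MB(G) + γ_MB(H) ≤ γ_MB(G ∪ H) ≤ min{γ_MB'(G) + γ_MB(H), γ_MB(G) + γ_MB'(H)}. -/
import Mathlib


open SimpleGraph

namespace MBD

variable {V : Type*}

/-- Dominator's claimed set `D` is a dominating set of `G`. -/
def Dominates (G : SimpleGraph V) (D : Finset V) : Prop :=
  ∀ v : V, ∃ d ∈ D, d = v ∨ G.Adj d v

/-- Staller's claimed set `S` contains the whole closed neighborhood of some vertex. -/
def StallerWinSet (G : SimpleGraph V) (S : Finset V) : Prop :=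
  ∃ v : V, ∀ u : V, (u = v ∨ G.Adj u v) → u ∈ S

variable [DecidableEq V]

mutual
  /-- `DomD G k D S`: with Dominator having claimed `D`, Staller `S`, and Dominator to
  move, Dominator has a strategy winning the Maker-Breaker domination game on `G`
  using at most `k` further moves of his own. -/
  inductive DomD (G : SimpleGraph V) : ℕ → Finset V → Finset V → Prop
    | win {k : ℕ} {D S : Finset V} : Dominates G D → DomD G k D S
    | move {k : ℕ} {D S : Finset V} (v : V) : v ∉ D → v ∉ S →
        DomS G k (insert v D) S → DomD G (k + 1) D S
  /-- Like `DomD`, but it is Staller's turn to move. -/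
  inductive DomS (G : SimpleGraph V) : ℕ → Finset V → Finset V → Prop
    | win {k : ℕ} {D S : Finset V} : Dominates G D → DomS G k D S
    | move {k : ℕ} {D S : Finset V} : (∃ v : V, v ∉ D ∧ v ∉ S) →
        (∀ v : V, v ∉ D → v ∉ S → DomD G k D (insert v S)) → DomS G k D S
end

mutual
  /-- `StallD G k D S`: with Dominator having claimed `D`, Staller `S`, and Dominator to
  move, Staller has a strategy winning (claiming a whole closed neighborhood) within at
  most `k` further moves of her own. -/
  inductive StallD (G : SimpleGraph V) : ℕ → Finset V → Finset V → Prop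
    | win {k : ℕ} {D S : Finset V} : StallerWinSet G S → StallD G k D S
    | move {k : ℕ} {D S : Finset V} : (∃ v : V, v ∉ D ∧ v ∉ S) →
        (∀ v : V, v ∉ D → v ∉ S → StallS G k (insert v D) S) → StallD G k D S
  /-- Like `StallD`, but it is Staller's turn to move. -/
  inductive StallS (G : SimpleGraph V) : ℕ → Finset V → Finset V → Prop
    | win {k : ℕ} {D S : Finset V} : StallerWinSet G S → StallS G k D S
    | move {k : ℕ} {D S : Finset V} (v : V) : v ∉ D → v ∉ S →
        StallD G k D (insert v S) → StallS G (k + 1) D S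
end

/-- Dominator has a winning strategy in the D-game (Dominator starts). -/
def DominatorWinsD (G : SimpleGraph V) : Prop := ∃ k, DomD G k ∅ ∅

/-- Dominator has a winning strategy in the S-game (Staller starts). -/
def DominatorWinsS (G : SimpleGraph V) : Prop := ∃ k, DomS G k ∅ ∅

/-- Staller has a winning strategy in the D-game (Dominator starts). -/
def StallerWinsD (G : SimpleGraph V) : Prop := ∃ k, StallD G k ∅ ∅

/-- Staller has a winning strategy in the S-game (Staller starts). -/
def StallerWinsS (G : SimpleGraph V) : Prop := ∃ k, StallS G k ∅ ∅

/-- Outcome `𝒟`: Dominator wins both the D-game and the S-game. -/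
def outcomeD (G : SimpleGraph V) : Prop := DominatorWinsD G ∧ DominatorWinsS G

/-- Outcome `𝒮`: Staller wins both the D-game and the S-game. -/
def outcomeS (G : SimpleGraph V) : Prop := StallerWinsD G ∧ StallerWinsS G

/-- Outcome `𝒩`: the first player wins in both games. -/
def outcomeN (G : SimpleGraph V) : Prop := DominatorWinsD G ∧ StallerWinsS G

/-- `γ_MB(G)`: the minimum number of Dominator's moves needed to win the D-game,
`∞` if he has no winning strategy. -/
noncomputable def gMB (G : SimpleGraph V) : ℕ∞ :=
  sInf ((fun k : ℕ => (k : ℕ∞)) '' {k | DomD G k ∅ ∅})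

/-- `γ_MB'(G)`: the minimum number of Dominator's moves needed to win the S-game. -/
noncomputable def gMB' (G : SimpleGraph V) : ℕ∞ :=
  sInf ((fun k : ℕ => (k : ℕ∞)) '' {k | DomS G k ∅ ∅})

/-- `γ_SMB(G)`: the minimum number of Staller's moves needed to win the D-game. -/
noncomputable def gSMB (G : SimpleGraph V) : ℕ∞ :=
  sInf ((fun k : ℕ => (k : ℕ∞)) '' {k | StallD G k ∅ ∅})

/-- `γ_SMB'(G)`: the minimum number of Staller's moves needed to win the S-game. -/
noncomputable def gSMB' (G : SimpleGraph V) : ℕ∞ :=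
  sInf ((fun k : ℕ => (k : ℕ∞)) '' {k | StallS G k ∅ ∅})

end MBD

section Lemmas

namespace MBD

open Sum

set_option linter.unusedSectionVars false

variable {V : Type*} [DecidableEq V] {G₀ : SimpleGraph V}

/-- joint succ monotonicity -/
theorem domD_succ : ∀ k, (∀ D S : Finset V, DomD G₀ k D S → DomD G₀ (k+1) D S) ∧
    (∀ D S : Finset V, DomS G₀ k D S → DomS G₀ (k+1) D S) := by
  intro k
  induction k using Nat.strong_induction_on with
  | _ k ih =>
    have hD : ∀ D S : Finset V, DomD G₀ k D S → DomD G₀ (k+1) D S := by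
      intro D S h
      cases h with
      | win h => exact DomD.win h
      | move v hvD hvS h' =>
        exact DomD.move v hvD hvS ((ih _ (Nat.lt_succ_self _)).2 _ _ h')
    refine ⟨hD, ?_⟩
    intro D S h
    cases h with
    | win h => exact DomS.win h
    | move hex h' => exact DomS.move hex fun v hvD hvS => hD _ _ (h' v hvD hvS)

theorem domD_mono {k k' : ℕ} {D S : Finset V} (h : DomD G₀ k D S) (hk : k ≤ k') :
    DomD G₀ k' D S := by
  induction hk with
  | refl => exact h
  | step _ ih => exact (domD_succ _).1 _ _ ih

theorem domS_mono {k k' : ℕ} {D S : Finset V} (h : DomS G₀ k D S) (hk : k ≤ k') :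
    DomS G₀ k' D S := by
  induction hk with
  | refl => exact h
  | step _ ih => exact (domD_succ _).2 _ _ ih

/-- shrinking Staller's set -/
theorem dom_sub : ∀ k, (∀ D S S' : Finset V, DomD G₀ k D S → S' ⊆ S → DomD G₀ k D S') ∧
    (∀ D S S' : Finset V, DomS G₀ k D S → S' ⊆ S → DomS G₀ k D S') := by
  intro k
  induction k using Nat.strong_induction_on with
  | _ k ih =>
    have hD : ∀ D S S' : Finset V, DomD G₀ k D S → S' ⊆ S → DomD G₀ k D S' := by
      intro D S S' h hS
      cases h with
      | win h => exact DomD.win h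
      | move v hvD hvS h' =>
        exact DomD.move v hvD (fun hc => hvS (hS hc))
          ((ih _ (Nat.lt_succ_self _)).2 _ _ _ h' hS)
    refine ⟨hD, ?_⟩
    intro D S S' h hS
    cases h with
    | win h => exact DomS.win h
    | move hex h' =>
      obtain ⟨u, huD, huS⟩ := hex
      refine DomS.move ⟨u, huD, fun hc => huS (hS hc)⟩ ?_
      intro v hvD hvS'
      by_cases hvS : v ∈ S
      · cases h' u huD huS with
        | win hw => exact DomD.win hw
        | move w hwD hwS h2 =>
          refine DomD.move w hwD (fun hc => ?_) ?_
          · rcases Finset.mem_insert.1 hc with rfl | hc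
            · exact hwS (Finset.mem_insert_of_mem hvS)
            · exact hwS (Finset.mem_insert_of_mem (hS hc))
          · refine (ih _ (Nat.lt_succ_self _)).2 _ _ _ h2 ?_
            intro x hx
            rcases Finset.mem_insert.1 hx with rfl | hx
            · exact Finset.mem_insert_of_mem hvS
            · exact Finset.mem_insert_of_mem (hS hx)
      · exact hD _ _ _ (h' v hvD hvS) (Finset.insert_subset_insert _ hS)

/-- pass: if Dominator wins with Staller to move, he also wins with himself to move. -/
theorem domS_to_domD {k : ℕ} {D S : Finset V} (h : DomS G₀ k D S) : DomD G₀ k D S := by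
  cases h with
  | win h => exact DomD.win h
  | move hex h' =>
    obtain ⟨u, huD, huS⟩ := hex
    cases h' u huD huS with
    | win hw => exact DomD.win hw
    | move w hwD hwS h2 =>
      exact DomD.move w hwD (fun hc => hwS (Finset.mem_insert_of_mem hc))
        ((dom_sub _).2 _ _ _ h2 (Finset.subset_insert _ _))

variable {α β : Type*} [DecidableEq α] [DecidableEq β]
  {G : SimpleGraph α} {H : SimpleGraph β}

theorem dominates_sum {D : Finset (α ⊕ β)} :
    Dominates (G ⊕g H) D ↔ Dominates G D.toLeft ∧ Dominates H D.toRight := by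
  constructor
  · intro hd
    constructor
    · intro v
      obtain ⟨d, hdD, hd2⟩ := hd (inl v)
      cases d with
      | inl d =>
        refine ⟨d, by simpa using hdD, ?_⟩
        rcases hd2 with h | h
        · exact Or.inl (by simpa using h)
        · exact Or.inr (by simpa using h)
      | inr d => rcases hd2 with h | h <;> simp at h
    · intro v
      obtain ⟨d, hdD, hd2⟩ := hd (inr v)
      cases d with
      | inr d =>
        refine ⟨d, by simpa using hdD, ?_⟩
        rcases hd2 with h | h
        · exact Or.inl (by simpa using h)
        · exact Or.inr (by simpa using h)
      | inl d => rcases hd2 with h | h <;> simp at h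
  · rintro ⟨h1, h2⟩ v
    cases v with
    | inl v =>
      obtain ⟨d, hdD, hd2⟩ := h1 v
      refine ⟨inl d, by simpa using hdD, ?_⟩
      rcases hd2 with rfl | h
      · exact Or.inl rfl
      · exact Or.inr (by simpa using h)
    | inr v =>
      obtain ⟨d, hdD, hd2⟩ := h2 v
      refine ⟨inr d, by simpa using hdD, ?_⟩
      rcases hd2 with rfl | h
      · exact Or.inl rfl
      · exact Or.inr (by simpa using h)

end MBD

end Lemmas

namespace MBD

open Sum

set_option linter.unusedSectionVars false

variable {α β : Type*} [DecidableEq α] [DecidableEq β]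
  {G : SimpleGraph α} {H : SimpleGraph β}

/-- If one side of the board is exhausted, Dominator must already dominate it. -/
theorem exh : ∀ n : ℕ, ∀ D S : Finset (α ⊕ β), DomS (G ⊕g H) n D S →
    ((∀ x : α, x ∈ D.toLeft ∨ x ∈ S.toLeft) → Dominates G D.toLeft) ∧
    ((∀ y : β, y ∈ D.toRight ∨ y ∈ S.toRight) → Dominates H D.toRight) := by
  intro n
  induction n using Nat.strong_induction_on with
  | _ n ih =>
    intro D S h
    cases h with
    | win hw => exact ⟨fun _ => (dominates_sum.1 hw).1, fun _ => (dominates_sum.1 hw).2⟩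
    | move hex hch =>
      obtain ⟨u₀, hu₀D, hu₀S⟩ := hex
      constructor
      · intro hexh
        cases u₀ with
        | inl x =>
          rcases hexh x with hc | hc
          · exact absurd (Finset.mem_toLeft.1 hc) hu₀D
          · exact absurd (Finset.mem_toLeft.1 hc) hu₀S
        | inr y =>
          cases hch (inr y) hu₀D hu₀S with
          | win hw => exact (dominates_sum.1 hw).1
          | move u' hu'D hu'S h2 =>
            cases u' with
            | inl v =>
              exfalso
              rcases hexh v with hc | hc
              · exact hu'D (Finset.mem_toLeft.1 hc)
              · exact hu'S (Finset.mem_insert_of_mem (Finset.mem_toLeft.1 hc))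
            | inr w =>
              have := (ih _ (Nat.lt_succ_self _) _ _ h2).1 (by simpa using hexh)
              simpa using this
      · intro hexh
        cases u₀ with
        | inr y =>
          rcases hexh y with hc | hc
          · exact absurd (Finset.mem_toRight.1 hc) hu₀D
          · exact absurd (Finset.mem_toRight.1 hc) hu₀S
        | inl x =>
          cases hch (inl x) hu₀D hu₀S with
          | win hw => exact (dominates_sum.1 hw).2
          | move u' hu'D hu'S h2 =>
            cases u' with
            | inr w =>
              exfalso
              rcases hexh w with hc | hc
              · exact hu'D (Finset.mem_toRight.1 hc)
              · exact hu'S (Finset.mem_insert_of_mem (Finset.mem_toRight.1 hc))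
            | inl v =>
              have := (ih _ (Nat.lt_succ_self _) _ _ h2).2 (by simpa using hexh)
              simpa using this

/-- Projection of a winning strategy on the sum to each component, Staller to move. -/
theorem projS : ∀ n : ℕ, ∀ D S : Finset (α ⊕ β), DomS (G ⊕g H) n D S →
    DomS G n D.toLeft S.toLeft ∧ DomS H n D.toRight S.toRight := by
  intro n
  induction n using Nat.strong_induction_on with
  | _ n ih =>
    intro D S h
    constructor
    · by_cases hexh : ∀ x : α, x ∈ D.toLeft ∨ x ∈ S.toLeft
      · exact DomS.win ((exh n D S h).1 hexh)
      · push_neg at hexh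
        obtain ⟨x₀, hx₀D, hx₀S⟩ := hexh
        cases h with
        | win hw => exact DomS.win (dominates_sum.1 hw).1
        | move hex hch =>
          refine DomS.move ⟨x₀, hx₀D, hx₀S⟩ ?_
          intro x hxD hxS
          cases hch (inl x) (by simpa using hxD) (by simpa using hxS) with
          | win hw => exact DomD.win (dominates_sum.1 hw).1
          | move u' hu'D hu'S h2 =>
            cases u' with
            | inl v =>
              have h3 := (ih _ (Nat.lt_succ_self _) _ _ h2).1
              simp only [Finset.toLeft_insert_inl, Finset.toLeft_insert_inr, Finset.toRight_insert_inl, Finset.toRight_insert_inr] at h3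
              exact DomD.move v (by simpa using hu'D)
                (by simpa using hu'S) h3
            | inr w =>
              have h3 := (ih _ (Nat.lt_succ_self _) _ _ h2).1
              simp only [Finset.toLeft_insert_inl, Finset.toLeft_insert_inr, Finset.toRight_insert_inl, Finset.toRight_insert_inr] at h3
              exact domD_mono (domS_to_domD h3) (Nat.le_succ _)
    · by_cases hexh : ∀ y : β, y ∈ D.toRight ∨ y ∈ S.toRight
      · exact DomS.win ((exh n D S h).2 hexh)
      · push_neg at hexh
        obtain ⟨y₀, hy₀D, hy₀S⟩ := hexh
        cases h with
        | win hw => exact DomS.win (dominates_sum.1 hw).2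
        | move hex hch =>
          refine DomS.move ⟨y₀, hy₀D, hy₀S⟩ ?_
          intro y hyD hyS
          cases hch (inr y) (by simpa using hyD) (by simpa using hyS) with
          | win hw => exact DomD.win (dominates_sum.1 hw).2
          | move u' hu'D hu'S h2 =>
            cases u' with
            | inr w =>
              have h3 := (ih _ (Nat.lt_succ_self _) _ _ h2).2
              simp only [Finset.toLeft_insert_inl, Finset.toLeft_insert_inr, Finset.toRight_insert_inl, Finset.toRight_insert_inr] at h3
              exact DomD.move w (by simpa using hu'D)
                (by simpa using hu'S) h3
            | inl v =>
              have h3 := (ih _ (Nat.lt_succ_self _) _ _ h2).2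
              simp only [Finset.toLeft_insert_inl, Finset.toLeft_insert_inr, Finset.toRight_insert_inl, Finset.toRight_insert_inr] at h3
              exact domD_mono (domS_to_domD h3) (Nat.le_succ _)

theorem projD {n : ℕ} {D S : Finset (α ⊕ β)} (h : DomD (G ⊕g H) n D S) :
    DomD G n D.toLeft S.toLeft ∧ DomD H n D.toRight S.toRight := by
  cases h with
  | win hw => exact ⟨DomD.win (dominates_sum.1 hw).1, DomD.win (dominates_sum.1 hw).2⟩
  | move u huD huS h2 =>
    cases u with
    | inl v =>
      constructor
      · have h3 := (projS _ _ _ h2).1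
        simp only [Finset.toLeft_insert_inl, Finset.toLeft_insert_inr, Finset.toRight_insert_inl, Finset.toRight_insert_inr] at h3
        exact DomD.move v (by simpa using huD) (by simpa using huS) h3
      · have h3 := (projS _ _ _ h2).2
        simp only [Finset.toLeft_insert_inl, Finset.toLeft_insert_inr, Finset.toRight_insert_inl, Finset.toRight_insert_inr] at h3
        exact domD_mono (domS_to_domD h3) (Nat.le_succ _)
    | inr w =>
      constructor
      · have h3 := (projS _ _ _ h2).1
        simp only [Finset.toLeft_insert_inl, Finset.toLeft_insert_inr, Finset.toRight_insert_inl, Finset.toRight_insert_inr] at h3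
        exact domD_mono (domS_to_domD h3) (Nat.le_succ _)
      · have h3 := (projS _ _ _ h2).2
        simp only [Finset.toLeft_insert_inl, Finset.toLeft_insert_inr, Finset.toRight_insert_inl, Finset.toRight_insert_inr] at h3
        exact DomD.move w (by simpa using huD) (by simpa using huS) h3

end MBD

namespace MBD

open Sum

set_option linter.unusedSectionVars false

variable {α β : Type*} [DecidableEq α] [DecidableEq β]
  {G : SimpleGraph α} {H : SimpleGraph β}

/-- Key lemma for the lower bound, Staller to move. -/
theorem lowS : ∀ n : ℕ, ∀ D S : Finset (α ⊕ β), DomS (G ⊕g H) n D S → ∀ a b : ℕ, a + b + 1 = n →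
    (DomS G a D.toLeft S.toLeft ∨ DomD H b D.toRight S.toRight) ∧
    (DomD G a D.toLeft S.toLeft ∨ DomS H b D.toRight S.toRight) := by
  intro n
  induction n using Nat.strong_induction_on with
  | _ n ih =>
    intro D S h a b hab
    cases h with
    | win hw =>
      exact ⟨Or.inl (DomS.win (dominates_sum.1 hw).1),
        Or.inl (DomD.win (dominates_sum.1 hw).1)⟩
    | move hex hch =>
      constructor
      · rw [or_iff_not_imp_right]
        intro hnr
        by_cases hexh : ∀ x : α, x ∈ D.toLeft ∨ x ∈ S.toLeft
        · exact DomS.win ((exh n D S (DomS.move hex hch)).1 hexh)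
        · push_neg at hexh
          obtain ⟨x₀, hx₀D, hx₀S⟩ := hexh
          refine DomS.move ⟨x₀, hx₀D, hx₀S⟩ ?_
          intro x hxD hxS
          cases hch (inl x) (by simpa using hxD) (by simpa using hxS) with
          | win hw => exact DomD.win (dominates_sum.1 hw).1
          | move u' hu'D hu'S h2 =>
            rename_i m
            cases u' with
            | inl v =>
              cases a with
              | zero =>
                exfalso
                apply hnr
                have h3 := (projS m _ _ h2).2
                simp only [Finset.toRight_insert_inl] at h3
                exact domD_mono (domS_to_domD h3) (by omega)
              | succ a' =>
                have h4 := (ih m (by omega) _ _ h2 a' b (by omega)).1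
                simp only [Finset.toLeft_insert_inl, Finset.toRight_insert_inl] at h4
                rcases h4 with h4 | h4
                · exact DomD.move v (by simpa using hu'D) (by simpa using hu'S) h4
                · exact absurd h4 hnr
            | inr w =>
              cases b with
              | zero =>
                have h3 := (projS m _ _ h2).1
                simp only [Finset.toLeft_insert_inr, Finset.toLeft_insert_inl] at h3
                exact domD_mono (domS_to_domD h3) (by omega)
              | succ b' =>
                have h4 := (ih m (by omega) _ _ h2 a b' (by omega)).2
                simp only [Finset.toLeft_insert_inr, Finset.toLeft_insert_inl,
                  Finset.toRight_insert_inr, Finset.toRight_insert_inl] at h4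
                rcases h4 with h4 | h4
                · exact h4
                · exact absurd
                    (DomD.move w (by simpa using hu'D) (by simpa using hu'S) h4) hnr
      · rw [or_iff_not_imp_left]
        intro hnl
        by_cases hexh : ∀ y : β, y ∈ D.toRight ∨ y ∈ S.toRight
        · exact DomS.win ((exh n D S (DomS.move hex hch)).2 hexh)
        · push_neg at hexh
          obtain ⟨y₀, hy₀D, hy₀S⟩ := hexh
          refine DomS.move ⟨y₀, hy₀D, hy₀S⟩ ?_
          intro y hyD hyS
          cases hch (inr y) (by simpa using hyD) (by simpa using hyS) with
          | win hw => exact DomD.win (dominates_sum.1 hw).2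
          | move u' hu'D hu'S h2 =>
            rename_i m
            cases u' with
            | inr w =>
              cases b with
              | zero =>
                exfalso
                apply hnl
                have h3 := (projS m _ _ h2).1
                simp only [Finset.toLeft_insert_inr] at h3
                exact domD_mono (domS_to_domD h3) (by omega)
              | succ b' =>
                have h4 := (ih m (by omega) _ _ h2 a b' (by omega)).2
                simp only [Finset.toRight_insert_inr, Finset.toLeft_insert_inr] at h4
                rcases h4 with h4 | h4
                · exact absurd h4 hnl
                · exact DomD.move w (by simpa using hu'D) (by simpa using hu'S) h4
            | inl v =>
              cases a with
              | zero =>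
                have h3 := (projS m _ _ h2).2
                simp only [Finset.toRight_insert_inl, Finset.toRight_insert_inr] at h3
                exact domD_mono (domS_to_domD h3) (by omega)
              | succ a' =>
                have h4 := (ih m (by omega) _ _ h2 a' b (by omega)).1
                simp only [Finset.toLeft_insert_inr, Finset.toLeft_insert_inl,
                  Finset.toRight_insert_inr, Finset.toRight_insert_inl] at h4
                rcases h4 with h4 | h4
                · exact absurd
                    (DomD.move v (by simpa using hu'D) (by simpa using hu'S) h4) hnl
                · exact h4

/-- Key lemma for the lower bound, Dominator to move. -/
theorem lowD {n a b : ℕ} {D S : Finset (α ⊕ β)} (h : DomD (G ⊕g H) n D S)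
    (hab : a + b + 1 = n) :
    DomD G a D.toLeft S.toLeft ∨ DomD H b D.toRight S.toRight := by
  cases h with
  | win hw => exact Or.inl (DomD.win (dominates_sum.1 hw).1)
  | move u huD huS h2 =>
    rename_i m
    cases u with
    | inl v =>
      cases a with
      | zero =>
        have h3 := (projS m _ _ h2).2
        simp only [Finset.toRight_insert_inl] at h3
        exact Or.inr (domD_mono (domS_to_domD h3) (by omega))
      | succ a' =>
        have h4 := (lowS m _ _ h2 a' b (by omega)).1
        simp only [Finset.toLeft_insert_inl, Finset.toRight_insert_inl] at h4
        rcases h4 with h4 | h4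
        · exact Or.inl (DomD.move v (by simpa using huD) (by simpa using huS) h4)
        · exact Or.inr h4
    | inr w =>
      cases b with
      | zero =>
        have h3 := (projS m _ _ h2).1
        simp only [Finset.toLeft_insert_inr] at h3
        exact Or.inl (domD_mono (domS_to_domD h3) (by omega))
      | succ b' =>
        have h4 := (lowS m _ _ h2 a b' (by omega)).2
        simp only [Finset.toLeft_insert_inr, Finset.toRight_insert_inr] at h4
        rcases h4 with h4 | h4
        · exact Or.inl h4
        · exact Or.inr (DomD.move w (by simpa using huD) (by simpa using huS) h4)

/-- Upper bound: combining strategies on the two components. -/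
theorem up : ∀ n : ℕ, ∀ a b : ℕ, a + b = n →
    (∀ D S : Finset (α ⊕ β), DomD G a D.toLeft S.toLeft → DomS H b D.toRight S.toRight →
      DomD (G ⊕g H) n D S) ∧
    (∀ D S : Finset (α ⊕ β), DomS G a D.toLeft S.toLeft → DomD H b D.toRight S.toRight →
      DomD (G ⊕g H) n D S) ∧
    (∀ D S : Finset (α ⊕ β), DomS G a D.toLeft S.toLeft → DomS H b D.toRight S.toRight →
      DomS (G ⊕g H) n D S) := by
  intro n
  induction n using Nat.strong_induction_on with
  | _ n ih =>
    intro a b hab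
    have u1 : ∀ D S : Finset (α ⊕ β), DomD G a D.toLeft S.toLeft →
        DomS H b D.toRight S.toRight → DomD (G ⊕g H) n D S := by
      intro D S hG hH
      cases hG with
      | win hg =>
        cases domS_to_domD hH with
        | win hh => exact DomD.win (dominates_sum.2 ⟨hg, hh⟩)
        | move w hwD hwS h2 =>
          rename_i m
          have h3 : DomS (G ⊕g H) (a + m) (insert (inr w) D) S := by
            refine (ih (a + m) (by omega) a m rfl).2.2 _ _ ?_ ?_
            · exact DomS.win (by simpa using hg)
            · simpa using h2
          have hn : n = (a + m) + 1 := by omega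
          rw [hn]
          exact DomD.move (inr w) (by simpa using hwD) (by simpa using hwS) h3
      | move v hvD hvS h2 =>
        rename_i m
        have h3 : DomS (G ⊕g H) (m + b) (insert (inl v) D) S := by
          refine (ih (m + b) (by omega) m b rfl).2.2 _ _ ?_ ?_
          · simpa using h2
          · simpa using hH
        have hn : n = (m + b) + 1 := by omega
        rw [hn]
        exact DomD.move (inl v) (by simpa using hvD) (by simpa using hvS) h3
    have u2 : ∀ D S : Finset (α ⊕ β), DomS G a D.toLeft S.toLeft →
        DomD H b D.toRight S.toRight → DomD (G ⊕g H) n D S := by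
      intro D S hG hH
      cases hH with
      | win hh =>
        cases domS_to_domD hG with
        | win hg => exact DomD.win (dominates_sum.2 ⟨hg, hh⟩)
        | move v hvD hvS h2 =>
          rename_i m
          have h3 : DomS (G ⊕g H) (m + b) (insert (inl v) D) S := by
            refine (ih (m + b) (by omega) m b rfl).2.2 _ _ ?_ ?_
            · simpa using h2
            · exact DomS.win (by simpa using hh)
          have hn : n = (m + b) + 1 := by omega
          rw [hn]
          exact DomD.move (inl v) (by simpa using hvD) (by simpa using hvS) h3
      | move w hwD hwS h2 =>
        rename_i m
        have h3 : DomS (G ⊕g H) (a + m) (insert (inr w) D) S := by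
          refine (ih (a + m) (by omega) a m rfl).2.2 _ _ ?_ ?_
          · simpa using hG
          · simpa using h2
        have hn : n = (a + m) + 1 := by omega
        rw [hn]
        exact DomD.move (inr w) (by simpa using hwD) (by simpa using hwS) h3
    refine ⟨u1, u2, ?_⟩
    intro D S hG hH
    have hGc : ∀ x, x ∉ D.toLeft → x ∉ S.toLeft →
        DomD G a D.toLeft (insert x S.toLeft) := by
      cases hG with
      | win hg => exact fun x _ _ => DomD.win hg
      | move hex hch => exact hch
    have hHc : ∀ y, y ∉ D.toRight → y ∉ S.toRight →
        DomD H b D.toRight (insert y S.toRight) := by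
      cases hH with
      | win hh => exact fun y _ _ => DomD.win hh
      | move hex hch => exact hch
    have key : ∀ u : α ⊕ β, u ∉ D → u ∉ S → DomD (G ⊕g H) n D (insert u S) := by
      intro u huD huS
      cases u with
      | inl x =>
        refine u1 D (insert (inl x) S) ?_ ?_
        · simpa using hGc x (by simpa using huD) (by simpa using huS)
        · simpa using hH
      | inr y =>
        refine u2 D (insert (inr y) S) ?_ ?_
        · simpa using hG
        · simpa using hHc y (by simpa using huD) (by simpa using huS)
    cases hG with
    | move hexG hchG =>
      obtain ⟨x₀, h1, h2⟩ := hexG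
      exact DomS.move ⟨inl x₀, by simpa using h1, by simpa using h2⟩ key
    | win hg =>
      cases hH with
      | win hh => exact DomS.win (dominates_sum.2 ⟨hg, hh⟩)
      | move hexH hchH =>
        obtain ⟨y₀, h1, h2⟩ := hexH
        exact DomS.move ⟨inr y₀, by simpa using h1, by simpa using h2⟩ key

theorem toLeft_empty' : (∅ : Finset (α ⊕ β)).toLeft = ∅ := by ext x; simp

theorem toRight_empty' : (∅ : Finset (α ⊕ β)).toRight = ∅ := by ext x; simp

theorem coe_sInf (A : Set ℕ) (h : A.Nonempty) :
    sInf ((fun k : ℕ => (k : ℕ∞)) '' A) = ((sInf A : ℕ) : ℕ∞) := by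
  refine le_antisymm (sInf_le ⟨_, Nat.sInf_mem h, rfl⟩) (le_sInf ?_)
  rintro x ⟨k, hk, rfl⟩
  simp only []
  exact_mod_cast Nat.sInf_le hk

end MBD

namespace MBD

set_option linter.unusedSectionVars false

variable {V : Type*} [DecidableEq V] {G₁ : SimpleGraph V}

theorem gMB_le {k : ℕ} (h : DomD G₁ k ∅ ∅) : gMB G₁ ≤ (k : ℕ∞) :=
  sInf_le ⟨k, h, rfl⟩

theorem gMB_eq_coe (h : {k : ℕ | DomD G₁ k ∅ ∅}.Nonempty) :
    gMB G₁ = ((sInf {k : ℕ | DomD G₁ k ∅ ∅} : ℕ) : ℕ∞) := coe_sInf _ h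

theorem gMB_eq_top (h : ¬ {k : ℕ | DomD G₁ k ∅ ∅}.Nonempty) : gMB G₁ = ⊤ := by
  unfold gMB
  rw [Set.not_nonempty_iff_eq_empty.1 h]
  simp

theorem gMB'_eq_coe (h : {k : ℕ | DomS G₁ k ∅ ∅}.Nonempty) :
    gMB' G₁ = ((sInf {k : ℕ | DomS G₁ k ∅ ∅} : ℕ) : ℕ∞) := coe_sInf _ h

theorem gMB'_eq_top (h : ¬ {k : ℕ | DomS G₁ k ∅ ∅}.Nonempty) : gMB' G₁ = ⊤ := by
  unfold gMB'
  rw [Set.not_nonempty_iff_eq_empty.1 h]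
  simp

end MBD


/-- For the disjoint union `G ⊕g H`:
`γ_MB(G) + γ_MB(H) ≤ γ_MB(G ∪ H) ≤ min{γ_MB'(G) + γ_MB(H), γ_MB(G) + γ_MB'(H)}`. -/
theorem stmt_7 {α β : Type*} [Fintype α] [DecidableEq α] [Fintype β] [DecidableEq β]
    (G : SimpleGraph α) (H : SimpleGraph β) :
    MBD.gMB G + MBD.gMB H ≤ MBD.gMB (G ⊕g H) ∧
    MBD.gMB (G ⊕g H) ≤ min (MBD.gMB' G + MBD.gMB H) (MBD.gMB G + MBD.gMB' H) := by
  classical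
  constructor
  · -- lower bound
    by_cases hU : {k : ℕ | MBD.DomD (G ⊕g H) k ∅ ∅}.Nonempty
    · have hn : MBD.DomD (G ⊕g H) (sInf {k : ℕ | MBD.DomD (G ⊕g H) k ∅ ∅}) ∅ ∅ :=
        Nat.sInf_mem hU
      set n := sInf {k : ℕ | MBD.DomD (G ⊕g H) k ∅ ∅} with hndef
      have hproj := MBD.projD hn
      rw [MBD.toLeft_empty', MBD.toRight_empty'] at hproj
      have hGne : {k : ℕ | MBD.DomD G k ∅ ∅}.Nonempty := ⟨n, hproj.1⟩
      have hHne : {k : ℕ | MBD.DomD H k ∅ ∅}.Nonempty := ⟨n, hproj.2⟩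
      set a := sInf {k : ℕ | MBD.DomD G k ∅ ∅} with hadef
      set b := sInf {k : ℕ | MBD.DomD H k ∅ ∅} with hbdef
      have hab : a + b ≤ n := by
        rcases Nat.eq_zero_or_pos a with ha | ha
        · have hb : b ≤ n := Nat.sInf_le hproj.2
          omega
        · have han : a ≤ n := Nat.sInf_le hproj.1
          have hlow := MBD.lowD hn (a := a - 1) (b := n - a) (by omega)
          rw [MBD.toLeft_empty', MBD.toRight_empty'] at hlow
          rcases hlow with hl | hl
          · have : a ≤ a - 1 := Nat.sInf_le hl
            omega
          · have : b ≤ n - a := Nat.sInf_le hl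
            omega
      rw [MBD.gMB_eq_coe hGne, MBD.gMB_eq_coe hHne, MBD.gMB_eq_coe hU, ← hadef, ← hbdef,
        ← hndef]
      exact_mod_cast hab
    · rw [MBD.gMB_eq_top hU]
      exact le_top
  · refine le_min ?_ ?_
    · -- γ_MB(G ∪ H) ≤ γ_MB'(G) + γ_MB(H)
      by_cases h1 : {k : ℕ | MBD.DomS G k ∅ ∅}.Nonempty
      · by_cases h2 : {k : ℕ | MBD.DomD H k ∅ ∅}.Nonempty
        · have ha := Nat.sInf_mem h1
          have hb := Nat.sInf_mem h2
          set a := sInf {k : ℕ | MBD.DomS G k ∅ ∅} with hadef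
          set b := sInf {k : ℕ | MBD.DomD H k ∅ ∅} with hbdef
          have hu : MBD.DomD (G ⊕g H) (a + b) ∅ ∅ := by
            refine (MBD.up (a + b) a b rfl).2.1 ∅ ∅ ?_ ?_
            · rw [MBD.toLeft_empty']
              exact ha
            · rw [MBD.toRight_empty']
              exact hb
          have hle := MBD.gMB_le hu
          rw [MBD.gMB'_eq_coe h1, MBD.gMB_eq_coe h2, ← hadef, ← hbdef]
          refine le_trans hle ?_
          push_cast
          exact le_rfl
        · rw [MBD.gMB_eq_top h2, add_top]
          exact le_top
      · rw [MBD.gMB'_eq_top h1, top_add]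
        exact le_top
    · -- γ_MB(G ∪ H) ≤ γ_MB(G) + γ_MB'(H)
      by_cases h1 : {k : ℕ | MBD.DomD G k ∅ ∅}.Nonempty
      · by_cases h2 : {k : ℕ | MBD.DomS H k ∅ ∅}.Nonempty
        · have ha := Nat.sInf_mem h1
          have hb := Nat.sInf_mem h2
          set a := sInf {k : ℕ | MBD.DomD G k ∅ ∅} with hadef
          set b := sInf {k : ℕ | MBD.DomS H k ∅ ∅} with hbdef
          have hu : MBD.DomD (G ⊕g H) (a + b) ∅ ∅ := by
            refine (MBD.up (a + b) a b rfl).1 ∅ ∅ ?_ ?_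
            · rw [MBD.toLeft_empty']
              exact ha
            · rw [MBD.toRight_empty']
              exact hb
          have hle := MBD.gMB_le hu
          rw [MBD.gMB_eq_coe h1, MBD.gMB'_eq_coe h2, ← hadef, ← hbdef]
          refine le_trans hle ?_
          push_cast
          exact le_rfl
        · rw [MBD.gMB'_eq_top h2, add_top]
          exact le_top
      · rw [MBD.gMB_eq_top h1, top_add]
        exact le_top
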